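/- Let C₀, η₁ > 0, ρ, θ ∈ (0,1), 𝔭 ∈ (−1,0), ρ < (1−θ)^{1+𝔭}, ζ = log(1−θ)/log ρ, and let u : Q₁ → ℝ. Suppose for every j ∈ ℕ there exists ℓ_j ∈ ℝⁿ with |ℓ_j| ≤ C₀(1−θ)^j, |ℓ_{j+1}−ℓ_j| ≤ C₀(1−θ)^j, and osc over Q_{ρ^j}^{(1−θ)^j} of (u(x,t) − ℓ_j·x) is at most η₁ ρ^j (1−θ)^j, where Q_r^λ = B_r × (−r²λ^{−𝔭}, 0]. Then with ℓ_∞ = lim ℓ_j there is a constant C depending only on C₀, η₁, ρ, θ such that |u(x,t) − u(0,0) − ℓ_∞·x| ≤ C(|x|^{1+ζ} + |t|^{(1+ζ)/(2−ζ𝔭)}) for all (x,t) ∈ Q_ρ^{(1−θ)}. -/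

import Mathlib

open Filter

/-- Campanato-type iteration to a pointwise `C^{1+ζ}` estimate at the origin. -/
theorem stmt16 (n : ℕ) (C₀ η₁ ρ θ p ζ : ℝ)
    (hC₀ : 0 < C₀) (hη₁ : 0 < η₁)
    (hρ : ρ ∈ Set.Ioo (0 : ℝ) 1) (hθ : θ ∈ Set.Ioo (0 : ℝ) 1)
    (hp : p ∈ Set.Ioo (-1 : ℝ) 0) (hρθ : ρ < (1 - θ) ^ (1 + p))
    (hζ : ζ = Real.log (1 - θ) / Real.log ρ)
    (Qcyl : ℝ → ℝ → Set (EuclideanSpace ℝ (Fin n) × ℝ))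
    (hQcyl : Qcyl = fun r lam =>
      {z | ‖z.1‖ < r ∧ z.2 ∈ Set.Ioc (-(r ^ 2 * lam ^ (-p))) 0})
    (u : EuclideanSpace ℝ (Fin n) × ℝ → ℝ)
    (ℓ : ℕ → EuclideanSpace ℝ (Fin n))
    (hbd : ∀ j : ℕ, ‖ℓ j‖ ≤ C₀ * (1 - θ) ^ j)
    (hstep : ∀ j : ℕ, ‖ℓ (j + 1) - ℓ j‖ ≤ C₀ * (1 - θ) ^ j)
    (hosc : ∀ j : ℕ, ∀ z ∈ Qcyl (ρ ^ j) ((1 - θ) ^ j), ∀ w ∈ Qcyl (ρ ^ j) ((1 - θ) ^ j),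
      (u z - inner ℝ (ℓ j) z.1) - (u w - inner ℝ (ℓ j) w.1) ≤ η₁ * ρ ^ j * (1 - θ) ^ j)
    (ℓlim : EuclideanSpace ℝ (Fin n)) (hlim : Tendsto ℓ atTop (nhds ℓlim)) :
    ∃ C : ℝ, 0 < C ∧ ∀ z ∈ Qcyl ρ (1 - θ),
      |u z - u (0, 0) - inner ℝ ℓlim z.1| ≤
        C * (‖z.1‖ ^ (1 + ζ) + |z.2| ^ ((1 + ζ) / (2 - ζ * p))) := by
  obtain ⟨hρ0, hρ1⟩ := hρ
  obtain ⟨hθ0, hθ1⟩ := hθ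
  obtain ⟨hp0, hp1⟩ := hp
  set lam : ℝ := 1 - θ with hlamdef
  have hlam0 : 0 < lam := by simp only [hlamdef]; linarith
  have hlam1 : lam < 1 := by simp only [hlamdef]; linarith
  have hlogρ : Real.log ρ < 0 := Real.log_neg hρ0 hρ1
  have hloglam : Real.log lam < 0 := Real.log_neg hlam0 hlam1
  have hζ0 : 0 < ζ := by rw [hζ]; exact div_pos_of_neg_of_neg hloglam hlogρ
  have hρζ : ρ ^ ζ = lam := by
    rw [Real.rpow_def_of_pos hρ0, hζ, mul_comm, div_mul_cancel₀ _ (ne_of_lt hlogρ),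
      Real.exp_log hlam0]
  -- b = lam ^ (-p)
  set b : ℝ := lam ^ (-p) with hbdef
  have hb0 : 0 < b := Real.rpow_pos_of_pos hlam0 _
  have hbj : ∀ j : ℕ, ((lam ^ j : ℝ)) ^ (-p) = b ^ j := by
    intro j
    rw [← Real.rpow_natCast lam j, ← Real.rpow_mul hlam0.le, mul_comm,
      Real.rpow_mul hlam0.le, Real.rpow_natCast]
  set q : ℝ := ρ ^ 2 * b with hqdef
  have hq0 : 0 < q := by positivity
  have hq1 : q < 1 := by
    have h1 : lam ^ (1 + p) * b = lam := by
      rw [hbdef, ← Real.rpow_add hlam0]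
      norm_num
    have h2 : q < (lam ^ (1 + p)) * (lam ^ (1 + p) * b) := by
      rw [hqdef, pow_two]
      have hb' : 0 < lam ^ (1 + p) := Real.rpow_pos_of_pos hlam0 _
      have := mul_lt_mul'' hρθ hρθ hρ0.le hρ0.le
      nlinarith
    rw [h1] at h2
    calc q < lam ^ (1 + p) * lam := h2
      _ < 1 * 1 := by
          have hb' : lam ^ (1 + p) < 1 := by
            apply Real.rpow_lt_one hlam0.le hlam1; linarith
          exact mul_lt_mul'' hb' hlam1 (Real.rpow_pos_of_pos hlam0 _).le hlam0.le
      _ = 1 := by norm_num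
  -- membership characterization
  have hmem : ∀ (j : ℕ) (z : EuclideanSpace ℝ (Fin n) × ℝ),
      z ∈ Qcyl (ρ ^ j) (lam ^ j) ↔ (‖z.1‖ < ρ ^ j ∧ (-(q ^ j) < z.2 ∧ z.2 ≤ 0)) := by
    intro j z
    have he : ((ρ ^ j : ℝ)) ^ 2 * ((lam ^ j : ℝ)) ^ (-p) = q ^ j := by
      rw [hbj, hqdef, mul_pow, ← pow_mul, ← pow_mul, mul_comm j 2, pow_mul]
    rw [hQcyl]
    simp only [Set.mem_setOf_eq, Set.mem_Ioc, he]
  -- the origin is in every cylinder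
  have h00 : ∀ j : ℕ, ((0, 0) : EuclideanSpace ℝ (Fin n) × ℝ) ∈ Qcyl (ρ ^ j) (lam ^ j) := by
    intro j
    rw [hmem]
    refine ⟨by simp; positivity, neg_lt_zero.mpr (by positivity), le_refl _⟩
  -- oscillation bound with the origin
  have key : ∀ (j : ℕ) (z : EuclideanSpace ℝ (Fin n) × ℝ), z ∈ Qcyl (ρ ^ j) (lam ^ j) →
      |u z - u (0, 0) - inner ℝ (ℓ j) z.1| ≤ η₁ * ρ ^ j * lam ^ j := by
    intro j z hz
    have h1 := hosc j z hz (0, 0) (h00 j)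
    have h2 := hosc j (0, 0) (h00 j) z hz
    have hz0 : (inner ℝ (ℓ j) (((0, 0) : EuclideanSpace ℝ (Fin n) × ℝ)).1 : ℝ) = 0 := by
      simp
    rw [hz0] at h1 h2
    rw [abs_le]
    constructor <;> linarith
  -- tail bound for ℓ
  have tail : ∀ j : ℕ, ‖ℓlim - ℓ j‖ ≤ C₀ * lam ^ j / θ := by
    intro j
    have hd : ∀ m : ℕ, dist (ℓ m) (ℓ (m + 1)) ≤ C₀ * lam ^ m := by
      intro m
      rw [dist_eq_norm, norm_sub_rev]
      exact hstep m
    have := dist_le_of_le_geometric_of_tendsto lam C₀ hlam1 hd hlim j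
    rw [dist_comm, dist_eq_norm] at this
    have hθeq : 1 - lam = θ := by simp [hlamdef]
    rwa [hθeq] at this
  set M : ℝ := η₁ + C₀ / θ with hMdef
  have hM0 : 0 < M := by positivity
  -- bound with the limit slope, for z in the j-th cylinder
  have main : ∀ (j : ℕ) (z : EuclideanSpace ℝ (Fin n) × ℝ), z ∈ Qcyl (ρ ^ j) (lam ^ j) →
      |u z - u (0, 0) - inner ℝ ℓlim z.1| ≤ M * (ρ ^ j * lam ^ j) := by
    intro j z hz
    have h1 := key j z hz
    have h2 : |(inner ℝ (ℓ j) z.1 : ℝ) - inner ℝ ℓlim z.1| ≤ (C₀ * lam ^ j / θ) * ρ ^ j := by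
      have : (inner ℝ (ℓ j) z.1 : ℝ) - inner ℝ ℓlim z.1 = inner ℝ (ℓ j - ℓlim) z.1 := by
        rw [inner_sub_left]
      rw [this]
      calc |(inner ℝ (ℓ j - ℓlim) z.1 : ℝ)| ≤ ‖ℓ j - ℓlim‖ * ‖z.1‖ :=
            abs_real_inner_le_norm _ _
        _ ≤ (C₀ * lam ^ j / θ) * ρ ^ j := by
            apply mul_le_mul
            · rw [norm_sub_rev]; exact tail j
            · exact ((hmem j z).mp hz).1.le
            · exact norm_nonneg _
            · positivity
    calc |u z - u (0, 0) - inner ℝ ℓlim z.1|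
        = |(u z - u (0, 0) - inner ℝ (ℓ j) z.1) + ((inner ℝ (ℓ j) z.1 : ℝ) - inner ℝ ℓlim z.1)| := by
          ring_nf
      _ ≤ |u z - u (0, 0) - inner ℝ (ℓ j) z.1| + |(inner ℝ (ℓ j) z.1 : ℝ) - inner ℝ ℓlim z.1| :=
          abs_add_le _ _
      _ ≤ η₁ * ρ ^ j * lam ^ j + (C₀ * lam ^ j / θ) * ρ ^ j := add_le_add h1 h2
      _ = M * (ρ ^ j * lam ^ j) := by rw [hMdef]; ring
  -- rpow identities
  have hid : ∀ j : ℕ, ρ ^ ((1 + ζ) * (j : ℝ)) = ρ ^ j * lam ^ j := by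
    intro j
    rw [add_mul, one_mul, Real.rpow_add hρ0, Real.rpow_natCast,
      mul_comm ζ (j : ℝ), mul_comm ((j : ℝ)) ζ, Real.rpow_mul hρ0.le, hρζ,
      Real.rpow_natCast]
  set β : ℝ := 2 - ζ * p with hβdef
  have hβ0 : 0 < β := by
    have : ζ * p < 0 := mul_neg_of_pos_of_neg hζ0 hp1
    simp only [hβdef]; linarith
  have hqβ : q = ρ ^ β := by
    have h1 : b = ρ ^ (ζ * (-p)) := by
      rw [hbdef, ← hρζ, ← Real.rpow_mul hρ0.le]
    have h2 : (ρ : ℝ) ^ 2 = ρ ^ (2 : ℝ) := by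
      rw [← Real.rpow_natCast ρ 2]; norm_num
    rw [hqdef, h1, h2, ← Real.rpow_add hρ0, hβdef]
    ring_nf
  set α : ℝ := (1 + ζ) / β with hαdef
  have hα0 : 0 < α := by positivity
  set R : ℝ := ρ ^ ((1 : ℝ) + ζ) with hRdef
  have hR0 : 0 < R := Real.rpow_pos_of_pos hρ0 _
  refine ⟨M / R, by positivity, ?_⟩
  intro z hz
  -- recast the hypothesis at scale 1
  have hz1 : ‖z.1‖ < ρ ∧ (-q < z.2 ∧ z.2 ≤ 0) := by
    have := (hmem 1 z).mp (by rw [pow_one, pow_one]; exact hz)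
    simpa using this
  by_cases htriv : z.1 = 0 ∧ z.2 = 0
  · have hz00 : z = ((0 : EuclideanSpace ℝ (Fin n)), (0 : ℝ)) := Prod.ext htriv.1 htriv.2
    rw [hz00]
    simp only [inner_zero_right, sub_zero, sub_self, abs_zero]
    positivity
  -- existence of a cylinder not containing z
  classical
  have hN : ∃ N : ℕ, z ∉ Qcyl (ρ ^ N) (lam ^ N) := by
    by_cases hx : z.1 = 0
    · have ht : z.2 ≠ 0 := fun h => htriv ⟨hx, h⟩
      have ht' : 0 < -z.2 := by
        have := hz1.2.2
        rcases lt_or_eq_of_le this with h | h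
        · linarith
        · exact absurd h ht
      obtain ⟨N, hNq⟩ := exists_pow_lt_of_lt_one ht' hq1
      refine ⟨N, fun hc => ?_⟩
      have := ((hmem N z).mp hc).2.1
      linarith
    · have hx' : 0 < ‖z.1‖ := norm_pos_iff.mpr hx
      obtain ⟨N, hNq⟩ := exists_pow_lt_of_lt_one hx' hρ1
      refine ⟨N, fun hc => ?_⟩
      have := ((hmem N z).mp hc).1
      linarith
  set k : ℕ := Nat.find hN with hkdef
  have hk : z ∉ Qcyl (ρ ^ k) (lam ^ k) := Nat.find_spec hN
  have hlt : ∀ m : ℕ, m < k → z ∈ Qcyl (ρ ^ m) (lam ^ m) := by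
    intro m hm
    by_contra hc
    exact Nat.find_min hN hm hc
  have hk2 : 2 ≤ k := by
    by_contra hc
    push_neg at hc
    interval_cases k
    · exact hk ((hmem 0 z).mpr ⟨by simpa using lt_trans hz1.1 hρ1,
        by simp only [pow_zero]; constructor <;> [linarith [hz1.2.1]; exact hz1.2.2]⟩)
    · exact hk (by rw [pow_one, pow_one]; exact hz)
  obtain ⟨j, hjk⟩ : ∃ j : ℕ, k = j + 1 := ⟨k - 1, by omega⟩
  have hzj : z ∈ Qcyl (ρ ^ j) (lam ^ j) := hlt j (by omega)
  have hzj1 : z ∉ Qcyl (ρ ^ (j + 1)) (lam ^ (j + 1)) := by rw [← hjk]; exact hk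
  -- main estimate
  have hmain := main j z hzj
  -- geometry: ρ^j * lam^j * R ≤ ‖z.1‖^(1+ζ) + |z.2|^α
  have hgeom : (ρ ^ j * lam ^ j) * R ≤ ‖z.1‖ ^ ((1 : ℝ) + ζ) + |z.2| ^ α := by
    have hRX : (ρ ^ j * lam ^ j) * R = ρ ^ ((1 + ζ) * ((j : ℝ) + 1)) := by
      rw [← hid j, hRdef, ← Real.rpow_add hρ0]
      ring_nf
    rw [hRX]
    by_cases hcase : ρ ^ (j + 1) ≤ ‖z.1‖
    · have h1 : ρ ^ ((1 + ζ) * ((j : ℝ) + 1)) ≤ ‖z.1‖ ^ ((1 : ℝ) + ζ) := by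
        have h2 : (ρ : ℝ) ^ ((1 + ζ) * ((j : ℝ) + 1)) = (ρ ^ (j + 1) : ℝ) ^ ((1 : ℝ) + ζ) := by
          rw [← Real.rpow_natCast ρ (j + 1), ← Real.rpow_mul hρ0.le]
          push_cast
          ring_nf
        rw [h2]
        exact Real.rpow_le_rpow (by positivity) hcase (by linarith)
      have h3 : (0 : ℝ) ≤ |z.2| ^ α := Real.rpow_nonneg (abs_nonneg _) _
      linarith
    · -- then the time condition must fail
      push_neg at hcase
      have htime : z.2 ≤ -(q ^ (j + 1)) := by
        by_contra hc
        push_neg at hc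
        exact hzj1 ((hmem (j + 1) z).mpr ⟨hcase, hc, hz1.2.2⟩)
      have habs : q ^ (j + 1) ≤ |z.2| := by
        rw [abs_of_nonpos hz1.2.2]
        linarith
      have h1 : ρ ^ ((1 + ζ) * ((j : ℝ) + 1)) ≤ |z.2| ^ α := by
        have h2 : (q ^ (j + 1) : ℝ) ^ α = ρ ^ ((1 + ζ) * ((j : ℝ) + 1)) := by
          rw [hqβ, ← Real.rpow_natCast (ρ ^ β) (j + 1), ← Real.rpow_mul hρ0.le,
            ← Real.rpow_mul hρ0.le]
          congr 1
          rw [hαdef]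
          field_simp
          push_cast
          ring
        rw [← h2]
        exact Real.rpow_le_rpow (by positivity) habs hα0.le
      have h3 : (0 : ℝ) ≤ ‖z.1‖ ^ ((1 : ℝ) + ζ) := Real.rpow_nonneg (norm_nonneg _) _
      linarith
  calc |u z - u (0, 0) - inner ℝ ℓlim z.1| ≤ M * (ρ ^ j * lam ^ j) := hmain
    _ ≤ M / R * (‖z.1‖ ^ ((1 : ℝ) + ζ) + |z.2| ^ α) := by
        rw [div_mul_eq_mul_div, le_div_iff₀ hR0, mul_assoc]
        exact mul_le_mul_of_nonneg_left hgeom hM0.le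
    _ = M / R * (‖z.1‖ ^ (1 + ζ) + |z.2| ^ ((1 + ζ) / (2 - ζ * p))) := by
        rw [hαdef, hβdef]
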